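/- The spherical polar map ω ↦ ω* = {y ∈ S^m : d(y,ω) ≥ π/2}, from the space of nonempty compact spherically convex subsets of S^m with the Hausdorff metric to itself, is continuous. -/

import Mathlib

open MeasureTheory Metric Set Real
open scoped ENNReal

noncomputable section

abbrev Euc (m : ℕ) : Type := EuclideanSpace ℝ (Fin (m + 1))

abbrev Sph (m : ℕ) : Type := Metric.sphere (0 : Euc m) 1

/-- geodesic distance on the sphere -/
def gdist {m : ℕ} (n x : Sph m) : ℝ :=
  Real.arccos (inner ℝ (n : Euc m) (x : Euc m))

/-- the logarithmic cost, with values in `[0,∞]` -/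
def cost {m : ℕ} (n x : Sph m) : ℝ≥0∞ :=
  if 0 < (inner ℝ (n : Euc m) (x : Euc m) : ℝ) then
    ENNReal.ofReal (-Real.log (inner ℝ (n : Euc m) (x : Euc m))) else ∞

/-- the uniform probability measure on the sphere -/
def unif (m : ℕ) : Measure (Sph m) :=
  ((volume : Measure (Euc m)).toSphere Set.univ)⁻¹ • (volume : Measure (Euc m)).toSphere

/-- the radial function of a set with respect to the origin -/
def radial {m : ℕ} (Ω : Set (Euc m)) (x : Sph m) : ℝ :=
  sSup {s : ℝ | 0 ≤ s ∧ s • (x : Euc m) ∈ Ω}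

/-- the Euclidean cone generated by a subset of the sphere -/
def cone {m : ℕ} (A : Set (Sph m)) : Set (Euc m) :=
  {y | ∃ r : ℝ, 0 ≤ r ∧ ∃ x ∈ A, y = r • (x : Euc m)}

/-- a subset of the sphere is spherically convex if the cone it generates is convex -/
def SphConvex {m : ℕ} (A : Set (Sph m)) : Prop := Convex ℝ (cone A)

/-- open `r`-neighbourhood for the geodesic distance -/
def nbhd {m : ℕ} (V : Set (Sph m)) (r : ℝ) : Set (Sph m) :=
  {y | ∃ x ∈ V, gdist y x < r}

/-- the spherical polar set -/
def spolar {m : ℕ} (ω : Set (Sph m)) : Set (Sph m) :=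
  {y | ∀ x ∈ ω, (inner ℝ (y : Euc m) (x : Euc m) : ℝ) ≤ 0}

/-- the support function of a star-shaped set -/
def suppFn {m : ℕ} (F : Set (Euc m)) (n : Sph m) : ℝ :=
  ⨆ x : Sph m, radial F x * (inner ℝ (x : Euc m) (n : Euc m) : ℝ)

/-- the polar set in Euclidean space -/
def polar {m : ℕ} (F : Set (Euc m)) : Set (Euc m) :=
  {n | ∀ x ∈ F, (inner ℝ x n : ℝ) ≤ 1}

/-- the logarithmic cost, with values in `ℝ ∪ {±∞}` -/
def costE {m : ℕ} (n x : Sph m) : EReal :=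
  if 0 < (inner ℝ (n : Euc m) (x : Euc m) : ℝ) then
    ((-Real.log (inner ℝ (n : Euc m) (x : Euc m)) : ℝ) : EReal) else ⊤

lemma sph_norm {m : ℕ} (x : Sph m) : ‖(x : Euc m)‖ = 1 :=
  mem_sphere_zero_iff_norm.mp x.2

lemma cone_smul_mem {m : ℕ} {A : Set (Sph m)} {p : Euc m} (hp : p ∈ cone A)
    {t : ℝ} (ht : 0 ≤ t) : t • p ∈ cone A := by
  obtain ⟨r, hr, x, hx, rfl⟩ := hp
  exact ⟨t * r, mul_nonneg ht hr, x, hx, (mul_smul t r _).symm⟩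

lemma key_approx {m : ℕ} (ω' : Set (Sph m)) (hc : IsCompact ω') (hne : ω'.Nonempty)
    (hconv : SphConvex ω') {δ : ℝ} (hδ0 : 0 ≤ δ) (hδ1 : δ < 1) (y : Sph m)
    (hy : ∀ x ∈ ω', (inner ℝ (y : Euc m) (x : Euc m) : ℝ) ≤ δ) :
    ∃ z ∈ spolar ω', dist y z ≤ 2 * δ := by
  set Y : Euc m := (y : Euc m) with hYdef
  have hY : ‖Y‖ = 1 := sph_norm y
  set D : Set (Euc m) := cone ω' ∩ Metric.closedBall 0 3 with hDdef
  have hDeq : D = (fun q : ℝ × Sph m => q.1 • (q.2 : Euc m)) '' (Set.Icc (0:ℝ) 3 ×ˢ ω') := by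
    ext v
    constructor
    · rintro ⟨⟨r, hr, x, hx, rfl⟩, hball⟩
      have hnorm : ‖r • (x : Euc m)‖ = r := by
        rw [norm_smul, sph_norm, mul_one, Real.norm_of_nonneg hr]
      rw [mem_closedBall_zero_iff, hnorm] at hball
      exact ⟨(r, x), ⟨⟨hr, hball⟩, hx⟩, rfl⟩
    · rintro ⟨⟨r, x⟩, ⟨⟨hr0, hr3⟩, hx⟩, rfl⟩
      simp only at hr0 hr3 hx ⊢
      refine ⟨⟨r, hr0, x, hx, rfl⟩, ?_⟩
      rw [mem_closedBall_zero_iff, norm_smul, sph_norm, mul_one, Real.norm_of_nonneg hr0]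
      exact hr3
  have hDcomp : IsCompact D := by
    rw [hDeq]
    exact ((isCompact_Icc.prod hc).image
      (continuous_fst.smul (continuous_subtype_val.comp continuous_snd)))
  have hDconv : Convex ℝ D := hconv.inter (convex_closedBall _ _)
  have hD0 : (0 : Euc m) ∈ D := by
    obtain ⟨x0, hx0⟩ := hne
    exact ⟨⟨0, le_refl 0, x0, hx0, (zero_smul ℝ _).symm⟩, Metric.mem_closedBall_self (by norm_num)⟩
  obtain ⟨p, hpD, hpmin⟩ :=
    exists_norm_eq_iInf_of_complete_convex ⟨0, hD0⟩ hDcomp.isComplete hDconv Y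
  have hchar : ∀ w ∈ D, (inner ℝ (Y - p) (w - p) : ℝ) ≤ 0 :=
    (norm_eq_iInf_iff_real_inner_le_zero hDconv hpD).mp hpmin
  -- ‖p‖ ≤ 2
  have hbdd : BddBelow (Set.range fun w : D => ‖Y - (w : Euc m)‖) := by
    refine ⟨0, ?_⟩
    rintro _ ⟨w, rfl⟩
    exact norm_nonneg _
  have hYp1 : ‖Y - p‖ ≤ 1 := by
    rw [hpmin]
    have := ciInf_le hbdd (⟨0, hD0⟩ : D)
    simpa [hY] using this
  have hp2 : ‖p‖ ≤ 2 := by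
    calc ‖p‖ = ‖p - Y + Y‖ := by rw [sub_add_cancel]
    _ ≤ ‖p - Y‖ + ‖Y‖ := norm_add_le _ _
    _ ≤ 1 + 1 := by rw [norm_sub_rev]; exact add_le_add hYp1 (le_of_eq hY)
    _ = 2 := by norm_num
  -- perpendicularity
  have hpc : p ∈ cone ω' := hpD.1
  have hsmulD : ∀ t : ℝ, 0 ≤ t → t * ‖p‖ ≤ 3 → t • p ∈ D := by
    intro t ht h3
    refine ⟨cone_smul_mem hpc ht, ?_⟩
    rw [mem_closedBall_zero_iff, norm_smul, Real.norm_of_nonneg ht]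
    exact h3
  have hperp : (inner ℝ (Y - p) p : ℝ) = 0 := by
    have h54 : ((5/4 : ℝ)) • p ∈ D := hsmulD _ (by norm_num) (by nlinarith)
    have h12 : ((1/2 : ℝ)) • p ∈ D := hsmulD _ (by norm_num) (by nlinarith [norm_nonneg p])
    have e54 := hchar _ h54
    have e12 := hchar _ h12
    have r54 : ((5/4 : ℝ)) • p - p = (1/4 : ℝ) • p := by module
    have r12 : ((1/2 : ℝ)) • p - p = (-(1/2) : ℝ) • p := by module
    rw [r54, real_inner_smul_right] at e54
    rw [r12, real_inner_smul_right] at e12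
    linarith
  have hCneg : ∀ w ∈ cone ω', (inner ℝ (Y - p) w : ℝ) ≤ 0 := by
    rintro _ ⟨r, hr, x, hx, rfl⟩
    have hxD : (x : Euc m) ∈ D := by
      refine ⟨⟨1, zero_le_one, x, hx, (one_smul ℝ _).symm⟩, ?_⟩
      rw [mem_closedBall_zero_iff, sph_norm]; norm_num
    have := hchar _ hxD
    rw [inner_sub_right, hperp, sub_zero] at this
    rw [real_inner_smul_right]
    exact mul_nonpos_of_nonneg_of_nonpos hr this
  -- ‖p‖ ≤ δ
  have hpδ : ‖p‖ ≤ δ := by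
    obtain ⟨r, hr, x, hx, hpeq⟩ := hpc
    have hnp : ‖p‖ = r := by rw [hpeq, norm_smul, sph_norm, mul_one, Real.norm_of_nonneg hr]
    have hYp : (inner ℝ Y p : ℝ) = ‖p‖ ^ 2 := by
      have := hperp
      rw [inner_sub_left, sub_eq_zero] at this
      rw [this, real_inner_self_eq_norm_sq]
    have hYp2 : (inner ℝ Y p : ℝ) ≤ r * δ := by
      rw [hpeq, real_inner_smul_right]
      exact mul_le_mul_of_nonneg_left (hy x hx) hr
    rw [hnp]
    nlinarith [hYp, hYp2, hnp]
  -- construct z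
  set z₀ : Euc m := Y - p with hz₀def
  have hz₀low : 1 - δ ≤ ‖z₀‖ := by
    have := norm_sub_norm_le Y p
    rw [hY] at this
    linarith
  have hz₀pos : 0 < ‖z₀‖ := by linarith
  set z : Euc m := ‖z₀‖⁻¹ • z₀ with hzdef
  have hz1 : ‖z‖ = 1 := by
    rw [hzdef, norm_smul, Real.norm_of_nonneg (inv_nonneg.mpr hz₀pos.le), inv_mul_cancel₀ hz₀pos.ne']
  refine ⟨⟨z, mem_sphere_zero_iff_norm.mpr hz1⟩, ?_, ?_⟩
  · intro x hx
    have hx' := hCneg (x : Euc m) ⟨1, zero_le_one, x, hx, (one_smul ℝ _).symm⟩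
    show (inner ℝ z (x : Euc m) : ℝ) ≤ 0
    rw [hzdef, real_inner_smul_left]
    exact mul_nonpos_of_nonneg_of_nonpos (inv_nonneg.mpr hz₀pos.le) hx'
  · have hd : dist y (⟨z, mem_sphere_zero_iff_norm.mpr hz1⟩ : Sph m) = ‖Y - z‖ := by
      rw [Subtype.dist_eq, dist_eq_norm]
    rw [hd]
    have h1 : ‖Y - z₀‖ = ‖p‖ := by rw [hz₀def, sub_sub_cancel]
    have h2 : ‖z₀ - z‖ = |‖z₀‖ - 1| := by
      have e : z₀ - z = (1 - ‖z₀‖⁻¹) • z₀ := by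
        rw [sub_smul, one_smul, hzdef]
      rw [e, norm_smul, Real.norm_eq_abs,
        show |1 - ‖z₀‖⁻¹| * ‖z₀‖ = |(1 - ‖z₀‖⁻¹) * ‖z₀‖| from by
          rw [abs_mul, abs_of_nonneg hz₀pos.le]]
      congr 1
      field_simp
    have h3 : |‖z₀‖ - 1| ≤ ‖p‖ := by
      have := abs_norm_sub_norm_le z₀ Y
      rw [hY] at this
      have e : z₀ - Y = -p := by rw [hz₀def]; abel
      rw [e, norm_neg] at this
      exact this
    calc ‖Y - z‖ = ‖(Y - z₀) + (z₀ - z)‖ := by abel_nf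
    _ ≤ ‖Y - z₀‖ + ‖z₀ - z‖ := norm_add_le _ _
    _ ≤ ‖p‖ + ‖p‖ := by rw [h1, h2]; exact add_le_add le_rfl h3
    _ ≤ 2 * δ := by linarith

/-- the spherical polar map is continuous for the Hausdorff metric on
nonempty compact spherically convex sets. -/
theorem spolar_continuous (m : ℕ) :
    ∀ ω : Set (Sph m), IsCompact ω → ω.Nonempty → SphConvex ω →
      ∀ ε > (0 : ℝ), ∃ δ > (0 : ℝ), ∀ ω' : Set (Sph m),
        IsCompact ω' → ω'.Nonempty → SphConvex ω' →
        Metric.hausdorffDist ω ω' < δ →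
        Metric.hausdorffDist (spolar ω) (spolar ω') < ε := by
  intro ω hcω hneω hconvω ε hε
  set δ := min (ε / 3) (1 / 2 : ℝ) with hδdef
  have hδ0 : 0 < δ := lt_min (by linarith) (by norm_num)
  refine ⟨δ, hδ0, ?_⟩
  intro ω' hcω' hneω' hconvω' hH
  have hδ1 : δ < 1 := lt_of_le_of_lt (min_le_right _ _) (by norm_num)
  have hfin : EMetric.hausdorffEdist ω ω' ≠ ⊤ :=
    Metric.hausdorffEdist_ne_top_of_nonempty_of_bounded hneω hneω' hcω.isBounded hcω'.isBounded
  have bound : ∀ (y x' x : Sph m), ((inner ℝ (y : Euc m) (x : Euc m) : ℝ) ≤ 0) →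
      dist x' x < δ → (inner ℝ (y : Euc m) (x' : Euc m) : ℝ) ≤ δ := by
    intro y x' x h0 hdist
    have hcs := real_inner_le_norm (y : Euc m) ((x' : Euc m) - (x : Euc m))
    rw [sph_norm, one_mul] at hcs
    have hdd : ‖(x' : Euc m) - (x : Euc m)‖ < δ := by
      rw [← dist_eq_norm, ← Subtype.dist_eq]; exact hdist
    have hexp : (inner ℝ (y : Euc m) ((x' : Euc m) - (x : Euc m)) : ℝ) =
        inner ℝ (y : Euc m) (x' : Euc m) - inner ℝ (y : Euc m) (x : Euc m) :=
      inner_sub_right _ _ _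
    rw [hexp] at hcs
    linarith
  have hle : Metric.hausdorffDist (spolar ω) (spolar ω') ≤ 2 * δ := by
    apply Metric.hausdorffDist_le_of_mem_dist (by linarith)
    · intro y hy
      apply key_approx ω' hcω' hneω' hconvω' hδ0.le hδ1
      intro x' hx'
      obtain ⟨x, hx, hdist⟩ := Metric.exists_dist_lt_of_hausdorffDist_lt' hx' hH hfin
      exact bound y x' x (hy x hx) (by rw [dist_comm]; exact hdist)
    · intro y hy
      apply key_approx ω hcω hneω hconvω hδ0.le hδ1
      intro x hx
      obtain ⟨x', hx', hdist⟩ := Metric.exists_dist_lt_of_hausdorffDist_lt hx hH hfin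
      exact bound y x x' (hy x' hx') hdist
  have hδ3 : δ ≤ ε / 3 := min_le_left _ _
  linarith
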